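/- If 0 < x < min(y, 1−y) with y in (0,1), then Φ̄^{−1}(x) − Φ̄^{−1}(y) ≤ (y − x)/(x·Φ̄^{−1}(x)). -/

import Mathlib

open Real

/-- Standard normal density. -/
noncomputable def gphi (t : ℝ) : ℝ := (Real.sqrt (2 * Real.pi))⁻¹ * Real.exp (-(t ^ 2) / 2)

/-- Standard normal upper-tail (survival) function. -/
noncomputable def Phibar (t : ℝ) : ℝ := ∫ s in Set.Ioi t, gphi s

/-- Inverse of the standard normal upper-tail function. -/
noncomputable def PhibarInv (x : ℝ) : ℝ := Function.invFun Phibar x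

open MeasureTheory Filter Set

lemma gphi_eq : gphi = ProbabilityTheory.gaussianPDFReal 0 1 := by
  funext t
  simp [gphi, ProbabilityTheory.gaussianPDFReal]

lemma gphi_pos (t : ℝ) : 0 < gphi t := by
  unfold gphi
  positivity

lemma gphi_cont : Continuous gphi := by
  unfold gphi
  fun_prop

lemma gphi_integrable : Integrable gphi := by
  rw [gphi_eq]
  exact ProbabilityTheory.integrable_gaussianPDFReal 0 1

lemma gphi_integral : ∫ t, gphi t = 1 := by
  rw [gphi_eq]
  exact ProbabilityTheory.integral_gaussianPDFReal_eq_one 0 one_ne_zero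

lemma Phibar_split {a b : ℝ} (h : a ≤ b) :
    Phibar a = (∫ t in Set.Ioc a b, gphi t) + Phibar b := by
  unfold Phibar
  rw [← MeasureTheory.setIntegral_union (Set.Ioc_disjoint_Ioi le_rfl) measurableSet_Ioi
    gphi_integrable.integrableOn gphi_integrable.integrableOn, Set.Ioc_union_Ioi_eq_Ioi h]

lemma Phibar_strictAnti : StrictAnti Phibar := by
  intro a b hab
  have h := Phibar_split hab.le
  have hpos : 0 < ∫ t in Set.Ioc a b, gphi t := by
    rw [← intervalIntegral.integral_of_le hab.le]
    exact intervalIntegral.intervalIntegral_pos_of_pos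
      gphi_integrable.intervalIntegrable gphi_pos hab
  linarith

lemma Phibar_eq_sub (b : ℝ) : Phibar b = Phibar 0 - ∫ t in (0:ℝ)..b, gphi t := by
  rcases le_total 0 b with h | h
  · have := Phibar_split h
    rw [intervalIntegral.integral_of_le h]
    linarith
  · have := Phibar_split h
    rw [intervalIntegral.integral_symm, intervalIntegral.integral_of_le h]
    linarith

lemma Phibar_cont : Continuous Phibar := by
  have : Phibar = fun b => Phibar 0 - ∫ t in (0:ℝ)..b, gphi t := funext Phibar_eq_sub
  rw [this]
  exact continuous_const.sub
    (intervalIntegral.continuous_primitive (fun a b => gphi_integrable.intervalIntegrable) 0)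

lemma Phibar_tendsto_atTop : Tendsto Phibar atTop (nhds 0) := by
  have h : Tendsto (fun b => ∫ t in (0:ℝ)..b, gphi t) atTop (nhds (Phibar 0)) :=
    intervalIntegral_tendsto_integral_Ioi 0 gphi_integrable.integrableOn tendsto_id
  have := (tendsto_const_nhds (x := Phibar 0)).sub h
  simp only [sub_self] at this
  exact this.congr (fun b => (Phibar_eq_sub b).symm)

lemma Phibar_tendsto_atBot : Tendsto Phibar atBot (nhds 1) := by
  have h : Tendsto (fun b => ∫ t in b..(0:ℝ), gphi t) atBot (nhds (∫ t in Set.Iic 0, gphi t)) :=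
    intervalIntegral_tendsto_integral_Iic 0 gphi_integrable.integrableOn tendsto_id
  have hsum : (∫ t in Set.Iic 0, gphi t) + Phibar 0 = 1 := by
    rw [Phibar, intervalIntegral.integral_Iic_add_Ioi gphi_integrable.integrableOn gphi_integrable.integrableOn,
      gphi_integral]
  have := h.const_add (Phibar 0)
  have heq : ∀ b : ℝ, Phibar 0 + ∫ t in b..(0:ℝ), gphi t = Phibar b := by
    intro b
    rw [Phibar_eq_sub b, intervalIntegral.integral_symm]
    ring
  have h2 : Tendsto Phibar atBot (nhds (Phibar 0 + ∫ t in Set.Iic 0, gphi t)) :=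
    this.congr heq
  rwa [add_comm, hsum] at h2

lemma Phibar_surj {x : ℝ} (h0 : 0 < x) (h1 : x < 1) : ∃ a, Phibar a = x := by
  obtain ⟨b, hb⟩ := (Phibar_tendsto_atTop.eventually_lt_const h0).exists
  obtain ⟨a, ha⟩ := (Phibar_tendsto_atBot.eventually_const_lt h1).exists
  rcases le_total a b with hab | hab
  · obtain ⟨c, _, hc⟩ := intermediate_value_Icc' hab Phibar_cont.continuousOn
      ⟨hb.le, ha.le⟩
    exact ⟨c, hc⟩
  · exact absurd (Phibar_strictAnti.le_iff_ge.mpr hab) (by nlinarith)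

lemma Phibar_PhibarInv {x : ℝ} (h0 : 0 < x) (h1 : x < 1) : Phibar (PhibarInv x) = x :=
  Function.invFun_eq (Phibar_surj h0 h1)

lemma Phibar_neg (a : ℝ) : Phibar (-a) = 1 - Phibar a := by
  have hsum : (∫ t in Set.Iic a, gphi t) + Phibar a = 1 := by
    rw [Phibar, intervalIntegral.integral_Iic_add_Ioi gphi_integrable.integrableOn gphi_integrable.integrableOn,
      gphi_integral]
  have hsym : (∫ t in Set.Iic a, gphi t) = Phibar (-a) := by
    rw [Phibar, ← integral_comp_neg_Iic]
    congr 1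
    funext t
    simp [gphi]
  linarith

lemma Phibar_zero : Phibar 0 = 1/2 := by
  have := Phibar_neg 0
  rw [neg_zero] at this
  linarith

lemma integrable_mul_gphi : Integrable (fun t => t * gphi t) := by
  have h := (integrable_mul_exp_neg_mul_sq (b := 1/2) (by norm_num)).const_mul
    ((Real.sqrt (2 * Real.pi))⁻¹)
  refine h.congr ?_
  filter_upwards with t
  unfold gphi
  rw [show -(1/2 : ℝ) * t^2 = -(t^2)/2 by ring]
  ring

lemma integral_mul_gphi (a : ℝ) : ∫ t in Set.Ioi a, t * gphi t = gphi a := by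
  have hderiv : ∀ t ∈ Set.Ioi a, HasDerivAt (fun t => -gphi t) (t * gphi t) t := by
    intro t _
    have h1 : HasDerivAt (fun s : ℝ => -(s^2)/2) (-t) t := by
      have h := (hasDerivAt_pow 2 t).neg.div_const 2
      refine h.congr_deriv ?_
      push_cast
      ring
    have h2 := (h1.exp.const_mul ((Real.sqrt (2 * Real.pi))⁻¹)).neg
    refine h2.congr_deriv ?_
    simp only [gphi]
    ring
  have htend : Tendsto (fun t => -gphi t) atTop (nhds 0) := by
    have hsq : Tendsto (fun t : ℝ => -(t^2)/2) atTop atBot := by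
      apply Filter.Tendsto.atBot_div_const (by norm_num : (0:ℝ) < 2)
      exact tendsto_neg_atTop_atBot.comp (tendsto_pow_atTop two_ne_zero)
    have := ((Real.tendsto_exp_atBot.comp hsq).const_mul ((Real.sqrt (2 * Real.pi))⁻¹)).neg
    simpa [gphi, Function.comp] using this
  have := MeasureTheory.integral_Ioi_of_hasDerivAt_of_tendsto
    (f := fun t => -gphi t) (f' := fun t => t * gphi t)
    (gphi_cont.neg.continuousWithinAt) hderiv
    integrable_mul_gphi.integrableOn htend
  rw [this]
  ring

lemma mills {a : ℝ} (ha : 0 < a) : a * Phibar a ≤ gphi a := by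
  rw [← integral_mul_gphi a]
  unfold Phibar
  rw [← MeasureTheory.integral_const_mul]
  apply MeasureTheory.setIntegral_mono_on
    (gphi_integrable.integrableOn.const_mul a) integrable_mul_gphi.integrableOn
    measurableSet_Ioi
  intro t ht
  have := (gphi_pos t).le
  nlinarith [Set.mem_Ioi.mp ht]

theorem quantile_diff_upper_small_x (x y : ℝ) (hy0 : 0 < y) (hy1 : y < 1)
    (hx0 : 0 < x) (hx : x < min y (1 - y)) :
    PhibarInv x - PhibarInv y ≤ (y - x) / (x * PhibarInv x) := by
  set a := PhibarInv x with ha_def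
  set b := PhibarInv y with hb_def
  have hxy : x < y := lt_of_lt_of_le hx (min_le_left _ _)
  have hx1y : x < 1 - y := lt_of_lt_of_le hx (min_le_right _ _)
  have hx1 : x < 1 := by linarith
  have ha : Phibar a = x := Phibar_PhibarInv hx0 hx1
  have hb : Phibar b = y := Phibar_PhibarInv hy0 hy1
  -- a > 0
  have hxhalf : x < 1/2 := by rcases le_total y (1/2) with h | h <;> linarith
  have ha0 : 0 < a := by
    by_contra h
    push_neg at h
    have := Phibar_strictAnti.antitone h
    rw [ha, Phibar_zero] at this
    linarith
  -- b < a
  have hba : b < a := by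
    by_contra h
    push_neg at h
    have := Phibar_strictAnti.antitone h
    rw [ha, hb] at this
    linarith
  -- b > -a
  have hbna : -a < b := by
    by_contra h
    push_neg at h
    have := Phibar_strictAnti.antitone h
    rw [hb, Phibar_neg, ha] at this
    linarith
  -- y - x = ∫ Ioc b a gphi ≥ (a - b) * gphi a
  have hsplit : Phibar b = (∫ t in Set.Ioc b a, gphi t) + Phibar a := Phibar_split hba.le
  have hlow : (a - b) * gphi a ≤ ∫ t in Set.Ioc b a, gphi t := by
    have hmono : ∀ t ∈ Set.Ioc b a, gphi a ≤ gphi t := by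
      intro t ht
      obtain ⟨ht1, ht2⟩ := ht
      unfold gphi
      have hc : (0:ℝ) ≤ (Real.sqrt (2 * Real.pi))⁻¹ := by positivity
      refine mul_le_mul_of_nonneg_left (Real.exp_le_exp.mpr ?_) hc
      have h2 : -a < t := by linarith
      nlinarith [mul_nonneg (sub_nonneg.mpr ht2) (by linarith : (0:ℝ) ≤ a + t)]
    calc (a - b) * gphi a = ∫ _ in Set.Ioc b a, gphi a := by
          rw [MeasureTheory.setIntegral_const, measureReal_def, Real.volume_Ioc, smul_eq_mul,
            ENNReal.toReal_ofReal (by linarith)]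
      _ ≤ ∫ t in Set.Ioc b a, gphi t := by
          apply MeasureTheory.setIntegral_mono_on (integrableOn_const ?_)
            gphi_integrable.integrableOn measurableSet_Ioc hmono
          rw [Real.volume_Ioc]
          exact ENNReal.ofReal_ne_top
  have hmills : a * x ≤ gphi a := by rw [← ha]; exact mills ha0
  have hkey : (a - b) * (a * x) ≤ y - x := by
    have h1 : (a - b) * (a * x) ≤ (a - b) * gphi a := by
      apply mul_le_mul_of_nonneg_left hmills (by linarith)
    have h2 : (∫ t in Set.Ioc b a, gphi t) = y - x := by rw [← ha, ← hb]; linarith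
    linarith
  have hax : 0 < x * a := mul_pos hx0 ha0
  rw [le_div_iff₀ hax]
  nlinarith
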